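/- The space of all GENEOs from ((Φ₁,‖·‖_{V₁}),G₁) to ((Φ₂,‖·‖_{V₂}),G₂) is compact with respect to the metric induced by the norm |||·|||_{L²}; in particular, every sequence of GENEOs admits a subsequence converging in |||·|||_{L²} to a GENEO. -/

import Mathlib

open MeasureTheory Filter Topology RealInnerProductSpace

noncomputable section

/-- The topology on a set induced by a pseudo-distance `d`, generated by the open balls. -/
def distTopology {X : Type*} (d : X → X → ℝ) : TopologicalSpace X :=
  TopologicalSpace.generateFrom {s : Set X | ∃ x r, s = {y | d x y < r}}

theorem statement18
    {X₁ X₂ : Type*} {V₁ V₂ : Type*}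
    [NormedAddCommGroup V₁] [InnerProductSpace ℝ V₁] [FiniteDimensional ℝ V₁]
    [MeasurableSpace V₁] [BorelSpace V₁]
    [NormedAddCommGroup V₂] [InnerProductSpace ℝ V₂] [FiniteDimensional ℝ V₂]
    [MeasurableSpace V₂] [BorelSpace V₂]
    (ev₁ : V₁ →ₗ[ℝ] (X₁ → ℝ)) (hev₁ : Function.Injective ev₁)
    (ev₂ : V₂ →ₗ[ℝ] (X₂ → ℝ)) (hev₂ : Function.Injective ev₂)
    (hbdd₁ : ∀ φ : V₁, BddAbove (Set.range fun x => |ev₁ φ x|))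
    (hbdd₂ : ∀ φ : V₂, BddAbove (Set.range fun x => |ev₂ φ x|))
    (α₁ β₁ α₂ β₂ : ℝ) (hα₁ : 0 < α₁) (hβ₁ : 0 < β₁) (hα₂ : 0 < α₂) (hβ₂ : 0 < β₂)
    (hnorm₁₁ : ∀ φ : V₁, α₁ * (⨆ x, |ev₁ φ x|) ≤ ‖φ‖)
    (hnorm₁₂ : ∀ φ : V₁, ‖φ‖ ≤ β₁ * (⨆ x, |ev₁ φ x|))
    (hnorm₂₁ : ∀ φ : V₂, α₂ * (⨆ x, |ev₂ φ x|) ≤ ‖φ‖)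
    (hnorm₂₂ : ∀ φ : V₂, ‖φ‖ ≤ β₂ * (⨆ x, |ev₂ φ x|))
    (Φ₁ : Set V₁) (Φ₂ : Set V₂)
    (lam₁ : Measure V₁) (f₁ : V₁ → ℝ) (hf₁0 : ∀ φ, 0 ≤ f₁ φ)
    (hf₁int : Integrable f₁ lam₁) (hf₁1 : ∫ φ, f₁ φ ∂lam₁ = 1)
    (lam₂ : Measure V₂) (f₂ : V₂ → ℝ) (hf₂0 : ∀ φ, 0 ≤ f₂ φ)
    (hf₂int : Integrable f₂ lam₂) (hf₂1 : ∫ φ, f₂ φ ∂lam₂ = 1)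
    (hΦ₁supp : Φ₁ = {φ : V₁ | ∀ U : Set V₁, IsOpen U → φ ∈ U →
      0 < (lam₁.withDensity fun ψ => ENNReal.ofReal (f₁ ψ)) U})
    (hΦ₁c : IsCompact Φ₁)
    (hΦ₂supp : Φ₂ = {φ : V₂ | ∀ U : Set V₂, IsOpen U → φ ∈ U →
      0 < (lam₂.withDensity fun ψ => ENNReal.ofReal (f₂ ψ)) U})
    (hΦ₂c : IsCompact Φ₂)
    {G₁ G₂ : Type*} [Group G₁] [Group G₂]
    (σ₁ : G₁ →* Equiv.Perm X₁) (hσ₁ : Function.Injective σ₁)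
    (σ₂ : G₂ →* Equiv.Perm X₂) (hσ₂ : Function.Injective σ₂)
    (ρ₁ : G₁ → V₁ → V₁)
    (hρ₁ : ∀ (g : G₁) (φ : V₁) (x : X₁), ev₁ (ρ₁ g φ) x = ev₁ φ (σ₁ g x))
    (ρ₂ : G₂ → V₂ → V₂)
    (hρ₂ : ∀ (g : G₂) (φ : V₂) (x : X₂), ev₂ (ρ₂ g φ) x = ev₂ φ (σ₂ g x))
    (hρΦ₁ : ∀ (g : G₁), ∀ φ ∈ Φ₁, ρ₁ g φ ∈ Φ₁)
    (hρΦ₂ : ∀ (g : G₂), ∀ φ ∈ Φ₂, ρ₂ g φ ∈ Φ₂)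
    (hinner₁ : ∀ (g : G₁) (φ φ' : V₁), ⟪ρ₁ g φ, ρ₁ g φ'⟫ = ⟪φ, φ'⟫)
    (hinner₂ : ∀ (g : G₂) (φ φ' : V₂), ⟪ρ₂ g φ, ρ₂ g φ'⟫ = ⟪φ, φ'⟫)
    (hf₁inv : ∀ (g : G₁) (φ : V₁), f₁ (ρ₁ g φ) = f₁ φ)
    (hf₂inv : ∀ (g : G₂) (φ : V₂), f₂ (ρ₂ g φ) = f₂ φ)
    (hlam₁inv : ∀ (g : G₁) (A : Set V₁), MeasurableSet A → lam₁ (ρ₁ g '' A) = lam₁ A)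
    (hlam₂inv : ∀ (g : G₂) (A : Set V₂), MeasurableSet A → lam₂ (ρ₂ g '' A) = lam₂ A)
    (T : G₁ →* G₂)
    (IsGENEO : (V₁ → V₂) → Prop)
    (hIsGENEO : ∀ F : V₁ → V₂, IsGENEO F ↔
      (ContinuousOn F Φ₁ ∧ Set.MapsTo F Φ₁ Φ₂ ∧
        (∀ (g : G₁), ∀ φ ∈ Φ₁, F (ρ₁ g φ) = ρ₂ (T g) (F φ)) ∧
        ∀ φ ∈ Φ₁, ∀ φ' ∈ Φ₁, ‖F φ - F φ'‖ ≤ ‖φ - φ'‖))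
    (nL2 : (V₁ → V₂) → ℝ)
    (hnL2 : ∀ F : V₁ → V₂,
      nL2 F = Real.sqrt (∫ φ in Φ₁, ‖F φ‖ ^ 2 * f₁ φ ∂lam₁))
    :
    ∀ Fseq : ℕ → V₁ → V₂, (∀ n, IsGENEO (Fseq n)) →
      ∃ (s : ℕ → ℕ) (F : V₁ → V₂), StrictMono s ∧ IsGENEO F ∧
        Tendsto (fun n => nL2 (Fseq (s n) - F)) atTop (𝓝 0) := by

  classical
  intro Fseq hF
  -- unpack GENEO properties
  have hprop := fun n => (hIsGENEO (Fseq n)).mp (hF n)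
  haveI : CompactSpace Φ₁ := isCompact_iff_compactSpace.mp hΦ₁c
  have hΦ₂cl : IsClosed Φ₂ := hΦ₂c.isClosed
  have hΦ₁meas : MeasurableSet Φ₁ := hΦ₁c.isClosed.measurableSet
  -- ρ₂ is an isometry
  have hρ₂sub : ∀ (h : G₂) (a b : V₂), ρ₂ h (a - b) = ρ₂ h a - ρ₂ h b := by
    intro h a b
    apply hev₂
    funext x
    have : ev₂ (ρ₂ h a - ρ₂ h b) x = ev₂ (ρ₂ h a) x - ev₂ (ρ₂ h b) x := by
      rw [map_sub]; rfl
    rw [hρ₂ h (a - b) x, this, hρ₂ h a x, hρ₂ h b x, map_sub]; rfl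
  have hρ₂norm : ∀ (h : G₂) (v : V₂), ‖ρ₂ h v‖ = ‖v‖ := by
    intro h v
    have h1 := hinner₂ h v v
    rw [real_inner_self_eq_norm_mul_norm, real_inner_self_eq_norm_mul_norm] at h1
    nlinarith [norm_nonneg (ρ₂ h v), norm_nonneg v]
  have hiso : ∀ h : G₂, Isometry (ρ₂ h) := by
    intro h
    apply Isometry.of_dist_eq
    intro a b
    rw [dist_eq_norm, dist_eq_norm, ← hρ₂sub h a b, hρ₂norm]
  -- the sequence as continuous maps
  let G : ℕ → C(Φ₁, V₂) := fun n => ⟨Φ₁.restrict (Fseq n), (hprop n).1.restrict⟩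
  -- the compact set of continuous maps
  let S : Set C(Φ₁, V₂) :=
    {g | (∀ x y : Φ₁, dist (g x) (g y) ≤ dist x y) ∧ ∀ x, g x ∈ Φ₂}
  have hT : IsCompact {f : Φ₁ → V₂ |
      (∀ x y : Φ₁, dist (f x) (f y) ≤ dist x y) ∧ ∀ x, f x ∈ Φ₂} := by
    apply IsCompact.of_isClosed_subset (isCompact_univ_pi fun _ : Φ₁ => hΦ₂c)
    · have heq : {f : Φ₁ → V₂ |
          (∀ x y : Φ₁, dist (f x) (f y) ≤ dist x y) ∧ ∀ x, f x ∈ Φ₂} =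
          (⋂ (x : Φ₁) (y : Φ₁), {f : Φ₁ → V₂ | dist (f x) (f y) ≤ dist x y}) ∩
          ⋂ (x : Φ₁), {f : Φ₁ → V₂ | f x ∈ Φ₂} := by
        ext f
        simp [Set.mem_iInter]
      rw [heq]
      apply IsClosed.inter
      · refine isClosed_iInter fun x => isClosed_iInter fun y => ?_
        exact isClosed_le (Continuous.dist (continuous_apply x) (continuous_apply y))
          continuous_const
      · exact isClosed_iInter fun x => hΦ₂cl.preimage (continuous_apply x)
    · intro f hf
      simp only [Set.mem_pi, Set.mem_univ, forall_true_left]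
      exact fun x => hf.2 x
  have himg : ContinuousMap.toFun '' S = {f : Φ₁ → V₂ |
      (∀ x y : Φ₁, dist (f x) (f y) ≤ dist x y) ∧ ∀ x, f x ∈ Φ₂} := by
    ext f
    constructor
    · rintro ⟨g, hg, rfl⟩; exact hg
    · intro hf
      have hlip : LipschitzWith 1 f := by
        apply LipschitzWith.of_dist_le_mul
        intro x y
        rw [NNReal.coe_one, one_mul]
        exact hf.1 x y
      exact ⟨⟨f, hlip.continuous⟩, hf, rfl⟩
  have hSeq : Equicontinuous ((↑) : S → Φ₁ → V₂) := by
    apply Metric.equicontinuous_of_continuity_modulus id tendsto_id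
    intro x y i
    exact i.2.1 x y
  have hScomp : IsCompact S :=
    ArzelaAscoli.isCompact_of_equicontinuous S (himg ▸ hT) hSeq
  have hGS : ∀ n, G n ∈ S := by
    intro n
    constructor
    · intro x y
      rw [Subtype.dist_eq, dist_eq_norm, dist_eq_norm]
      exact (hprop n).2.2.2 x x.2 y y.2
    · exact fun x => (hprop n).2.1 x.2
  obtain ⟨g, hgS, s, hs, hconv⟩ := hScomp.tendsto_subseq hGS
  -- pointwise convergence
  have hpt : ∀ x : Φ₁, Tendsto (fun n => Fseq (s n) x) atTop (𝓝 (g x)) := by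
    intro x
    exact ((continuous_eval_const x).tendsto g).comp hconv
  -- the limit operator
  set F : V₁ → V₂ := fun φ => if h : φ ∈ Φ₁ then g ⟨φ, h⟩ else 0 with hFdef
  have hFΦ : ∀ (φ : V₁) (h : φ ∈ Φ₁), F φ = g ⟨φ, h⟩ := by
    intro φ h; simp only [hFdef, dif_pos h]
  refine ⟨s, F, hs, ?_, ?_⟩
  · -- F is a GENEO
    rw [hIsGENEO]
    refine ⟨?_, ?_, ?_, ?_⟩
    · rw [continuousOn_iff_continuous_restrict]
      have : Φ₁.restrict F = g := by
        funext x
        exact hFΦ x x.2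
      change Continuous (Φ₁.restrict F); rw [this]
      exact g.continuous
    · intro φ hφ
      rw [hFΦ φ hφ]
      exact hgS.2 ⟨φ, hφ⟩
    · intro a φ hφ
      have h1 : ρ₁ a φ ∈ Φ₁ := hρΦ₁ a φ hφ
      rw [hFΦ _ h1, hFΦ _ hφ]
      have t1 : Tendsto (fun n => Fseq (s n) (ρ₁ a φ)) atTop (𝓝 (g ⟨ρ₁ a φ, h1⟩)) :=
        hpt ⟨ρ₁ a φ, h1⟩
      have t2 : Tendsto (fun n => Fseq (s n) (ρ₁ a φ)) atTop (𝓝 (ρ₂ (T a) (g ⟨φ, hφ⟩))) := by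
        have heq : (fun n => Fseq (s n) (ρ₁ a φ)) =
            fun n => ρ₂ (T a) (Fseq (s n) φ) := by
          funext n
          exact (hprop (s n)).2.2.1 a φ hφ
        rw [heq]
        exact (((hiso (T a)).continuous.tendsto _).comp (hpt ⟨φ, hφ⟩))
      exact tendsto_nhds_unique t1 t2
    · intro φ hφ φ' hφ'
      rw [hFΦ φ hφ, hFΦ φ' hφ']
      have := hgS.1 ⟨φ, hφ⟩ ⟨φ', hφ'⟩
      rw [Subtype.dist_eq, dist_eq_norm, dist_eq_norm] at this
      exact this
  · -- L² convergence
    have hd : Tendsto (fun n => dist (G (s n)) g) atTop (𝓝 0) :=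
      tendsto_iff_dist_tendsto_zero.mp hconv
    apply squeeze_zero (fun n => by rw [hnL2]; exact Real.sqrt_nonneg _) _ hd
    intro n
    rw [hnL2]
    have hI : (∫ φ in Φ₁, ‖(Fseq (s n) - F) φ‖ ^ 2 * f₁ φ ∂lam₁) ≤ dist (G (s n)) g ^ 2 := by
      calc (∫ φ in Φ₁, ‖(Fseq (s n) - F) φ‖ ^ 2 * f₁ φ ∂lam₁)
          ≤ ∫ φ in Φ₁, dist (G (s n)) g ^ 2 * f₁ φ ∂lam₁ := by
            apply integral_mono_of_nonneg
            · exact Filter.Eventually.of_forall fun φ =>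
                mul_nonneg (sq_nonneg _) (hf₁0 φ)
            · exact (hf₁int.restrict (s := Φ₁)).const_mul _
            · refine (ae_restrict_iff' hΦ₁meas).mpr (Filter.Eventually.of_forall ?_)
              intro φ hφ
              have hb : ‖(Fseq (s n) - F) φ‖ ≤ dist (G (s n)) g := by
                have : (Fseq (s n) - F) φ = Fseq (s n) φ - F φ := rfl
                rw [this, hFΦ φ hφ, ← dist_eq_norm]
                exact ContinuousMap.dist_apply_le_dist (f := G (s n)) (g := g) ⟨φ, hφ⟩
              exact mul_le_mul_of_nonneg_right
                (pow_le_pow_left₀ (norm_nonneg _) hb 2) (hf₁0 φ)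
        _ = dist (G (s n)) g ^ 2 * ∫ φ in Φ₁, f₁ φ ∂lam₁ := integral_const_mul _ _
        _ ≤ dist (G (s n)) g ^ 2 * 1 := by
            apply mul_le_mul_of_nonneg_left _ (sq_nonneg _)
            rw [← hf₁1]
            exact setIntegral_le_integral hf₁int
              (Filter.Eventually.of_forall hf₁0)
        _ = dist (G (s n)) g ^ 2 := mul_one _
    calc Real.sqrt (∫ φ in Φ₁, ‖(Fseq (s n) - F) φ‖ ^ 2 * f₁ φ ∂lam₁)
        ≤ Real.sqrt (dist (G (s n)) g ^ 2) := Real.sqrt_le_sqrt hI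
      _ = dist (G (s n)) g := Real.sqrt_sq dist_nonneg
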